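/- The classical algorithm for Büchi games is correct: on input a finite game graph G and B ⊆ S, iterating (compute R = Attr1(B∩S',G'), Tr = S' \ R, W' = Attr2(Tr,G'), remove W' from the game) until Tr is empty, the union W of all removed sets equals W2(coBuchi(S\B)), and its complement S \ W equals W1(Buchi(B)). -/

import Mathlib

open Classical

universe u

structure GameGraph (S : Type u) where
  E : S → Set S
  S1 : Set S
  succ_nonempty : ∀ s, (E s).Nonempty

namespace GameGraph

variable {S : Type u} (G : GameGraph S)

/-- A (general, history-dependent) strategy: given a history and the current
state, choose a successor. -/
abbrev Strat := { f : List S → S → S // ∀ h s, f h s ∈ G.E s }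

open Classical in
/-- The pair (history so far, current state) after `n` steps of the play from
`s` where player 1 uses `σ` (at states of `S1`) and player 2 uses `π`. -/
noncomputable def playPair (σ π : List S → S → S) (s : S) : ℕ → List S × S
  | 0 => ([], s)
  | n+1 =>
      let p := playPair σ π s n
      (p.1 ++ [p.2], if p.2 ∈ G.S1 then σ p.1 p.2 else π p.1 p.2)

/-- The unique play `ω(s,σ,π)`. -/
noncomputable def play (σ π : List S → S → S) (s : S) (n : ℕ) : S :=
  (G.playPair σ π s n).2

/-- Lift a memoryless strategy to a general one. -/
def liftML (f : S → S) : List S → S → S := fun _ s => f s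

def Reach (T : Set S) : Set (ℕ → S) := { ω | ∃ k, ω k ∈ T }

def Safe (F : Set S) : Set (ℕ → S) := { ω | ∀ k, ω k ∈ F }

/-- States occurring infinitely often in a play. -/
def InfOcc (ω : ℕ → S) : Set S := { t | ∀ N, ∃ k, N ≤ k ∧ ω k = t }

def Buchi (B : Set S) : Set (ℕ → S) := { ω | (InfOcc ω ∩ B).Nonempty }

def coBuchi (C : Set S) : Set (ℕ → S) := { ω | InfOcc ω ⊆ C }

/-- Winning set of player 1 for objective `Φ`. -/
def W1 (Φ : Set (ℕ → S)) : Set S :=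
  { s | ∃ σ : G.Strat, ∀ π : G.Strat, (G.play σ.1 π.1 s) ∈ Φ }

/-- Winning set of player 2 for objective `Ψ`. -/
def W2 (Ψ : Set (ℕ → S)) : Set S :=
  { s | ∃ π : G.Strat, ∀ σ : G.Strat, (G.play σ.1 π.1 s) ∈ Ψ }

/-- `U` is closed for player 1: player-1 states of `U` have all successors in
`U`, player-2 states of `U` have some successor in `U`. -/
def Closed1 (U : Set S) : Prop :=
  (∀ s ∈ U ∩ G.S1, G.E s ⊆ U) ∧ (∀ s ∈ U \ G.S1, (G.E s ∩ U).Nonempty)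

/-- `U` is closed for player 2. -/
def Closed2 (U : Set S) : Prop :=
  (∀ s ∈ U \ G.S1, G.E s ⊆ U) ∧ (∀ s ∈ U ∩ G.S1, (G.E s ∩ U).Nonempty)

/-- The inductive attractor sequence for player 1. -/
def AttrSeq1 (U : Set S) : ℕ → Set S
  | 0 => U
  | n+1 => AttrSeq1 U n
      ∪ { s | s ∈ G.S1 ∧ (G.E s ∩ AttrSeq1 U n).Nonempty }
      ∪ { s | s ∉ G.S1 ∧ G.E s ⊆ AttrSeq1 U n }

/-- Player-1 attractor of `U`. -/
def Attr1 (U : Set S) : Set S := ⋃ n, G.AttrSeq1 U n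

/-- The inductive attractor sequence for player 2. -/
def AttrSeq2 (U : Set S) : ℕ → Set S
  | 0 => U
  | n+1 => AttrSeq2 U n
      ∪ { s | s ∉ G.S1 ∧ (G.E s ∩ AttrSeq2 U n).Nonempty }
      ∪ { s | s ∈ G.S1 ∧ G.E s ⊆ AttrSeq2 U n }

/-- Player-2 attractor of `U`. -/
def Attr2 (U : Set S) : Set S := ⋃ n, G.AttrSeq2 U n

/-- Player-1 attractor sequence computed inside the region `X`
(i.e. in the restricted game `G ↾ X`). -/
def AttrSeq1In (X U : Set S) : ℕ → Set S
  | 0 => U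
  | n+1 => AttrSeq1In X U n
      ∪ { s | s ∈ X ∧ s ∈ G.S1 ∧ (G.E s ∩ AttrSeq1In X U n).Nonempty }
      ∪ { s | s ∈ X ∧ s ∉ G.S1 ∧ G.E s ∩ X ⊆ AttrSeq1In X U n }

/-- Player-1 attractor of `U` inside the region `X`. -/
def Attr1In (X U : Set S) : Set S := ⋃ n, G.AttrSeq1In X U n

/-- Player-2 attractor sequence computed inside the region `X`. -/
def AttrSeq2In (X U : Set S) : ℕ → Set S
  | 0 => U
  | n+1 => AttrSeq2In X U n
      ∪ { s | s ∈ X ∧ s ∉ G.S1 ∧ (G.E s ∩ AttrSeq2In X U n).Nonempty }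
      ∪ { s | s ∈ X ∧ s ∈ G.S1 ∧ G.E s ∩ X ⊆ AttrSeq2In X U n }

/-- Player-2 attractor of `U` inside the region `X`. -/
def Attr2In (X U : Set S) : Set S := ⋃ n, G.AttrSeq2In X U n

end GameGraph

open GameGraph

/-- The decreasing sequence of state sets computed by the classical algorithm:
at each step remove the player-2 attractor (within the current subgame) of the
complement of the player-1 attractor of the current Büchi states. -/
noncomputable def classicalS {S : Type u} (G : GameGraph S) (B : Set S) :
    ℕ → Set S
  | 0 => Set.univ
  | n+1 =>
      let S' := classicalS G B n
      S' \ G.Attr2In S' (S' \ G.Attr1In S' (B ∩ S'))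


section Aux

open GameGraph

variable {S : Type u}

/-- A nonincreasing sequence of naturals is eventually constant. -/
lemma nat_antitone_eventually_const (f : ℕ → ℕ) (h : ∀ n, f (n+1) ≤ f n) :
    ∃ N, ∀ m, N ≤ m → f m = f N := by
  have ha : Antitone f := antitone_nat_of_succ_le h
  have hne : (Set.range f).Nonempty := ⟨f 0, 0, rfl⟩
  obtain ⟨N, hN⟩ := Nat.sInf_mem hne
  refine ⟨N, fun m hm => le_antisymm (ha hm) ?_⟩
  rw [hN]; exact Nat.sInf_le ⟨m, rfl⟩

lemma nat_antitone_eventually_const_from (f : ℕ → ℕ) (K : ℕ)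
    (h : ∀ n, K ≤ n → f (n+1) ≤ f n) :
    ∃ N, K ≤ N ∧ ∀ m, N ≤ m → f m = f N := by
  obtain ⟨N, hN⟩ := nat_antitone_eventually_const (fun n => f (K + n))
    (fun n => h (K + n) (Nat.le_add_right _ _))
  refine ⟨K + N, Nat.le_add_right _ _, fun m hm => ?_⟩
  obtain ⟨d, rfl⟩ := Nat.exists_eq_add_of_le hm
  have := hN (N + d) (Nat.le_add_right _ _)
  simpa [Nat.add_assoc] using this

/-- Every function `ℕ → S` with `S` finite hits some state infinitely often
among any infinite (unbounded) set of B-times. -/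
lemma infOcc_inter_nonempty [Finite S] (ω : ℕ → S) (B : Set S)
    (h : ∀ k, ∃ j, k ≤ j ∧ ω j ∈ B) : (InfOcc ω ∩ B).Nonempty := by
  by_contra hc
  rw [Set.not_nonempty_iff_eq_empty] at hc
  have hfin : ∀ b ∈ B, {k | ω k = b}.Finite := by
    intro b hb
    have hb' : b ∉ InfOcc ω := by
      intro hmem
      have : b ∈ InfOcc ω ∩ B := ⟨hmem, hb⟩
      rw [hc] at this
      exact this
    simp only [InfOcc, Set.mem_setOf_eq, not_forall] at hb'
    obtain ⟨N, hN⟩ := hb'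
    refine (Set.finite_Iio N).subset ?_
    intro k hk
    by_contra hk'
    exact hN ⟨k, le_of_not_gt hk', hk⟩
  have hT : {k | ω k ∈ B}.Finite := by
    have : {k | ω k ∈ B} ⊆ ⋃ b ∈ B, {k | ω k = b} := by
      intro k hk; exact Set.mem_biUnion hk rfl
    exact (Set.Finite.biUnion B.toFinite hfin).subset this
  obtain ⟨N, hN⟩ := hT.bddAbove
  obtain ⟨j, hj, hjB⟩ := h (N + 1)
  have := hN hjB
  omega

variable (G : GameGraph S)

lemma attrSeq1In_mono (X U : Set S) : Monotone (G.AttrSeq1In X U) := by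
  apply monotone_nat_of_le_succ
  intro n s hs
  exact Or.inl (Or.inl hs)

lemma attrSeq2In_mono (X U : Set S) : Monotone (G.AttrSeq2In X U) := by
  apply monotone_nat_of_le_succ
  intro n s hs
  exact Or.inl (Or.inl hs)

lemma attrSeq1In_subset {X U : Set S} (hU : U ⊆ X) (n : ℕ) :
    G.AttrSeq1In X U n ⊆ X := by
  induction n with
  | zero => exact hU
  | succ n ih =>
    rintro s (( h | h) | h)
    · exact ih h
    · exact h.1
    · exact h.1

lemma attrSeq2In_subset {X U : Set S} (hU : U ⊆ X) (n : ℕ) :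
    G.AttrSeq2In X U n ⊆ X := by
  induction n with
  | zero => exact hU
  | succ n ih =>
    rintro s ((h | h) | h)
    · exact ih h
    · exact h.1
    · exact h.1

lemma attr1In_subset {X U : Set S} (hU : U ⊆ X) : G.Attr1In X U ⊆ X := by
  intro s hs; obtain ⟨n, hn⟩ := Set.mem_iUnion.1 hs
  exact attrSeq1In_subset G hU n hn

lemma attr2In_subset {X U : Set S} (hU : U ⊆ X) : G.Attr2In X U ⊆ X := by
  intro s hs; obtain ⟨n, hn⟩ := Set.mem_iUnion.1 hs
  exact attrSeq2In_subset G hU n hn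

lemma subset_attr1In (X U : Set S) : U ⊆ G.Attr1In X U :=
  fun s hs => Set.mem_iUnion.2 ⟨0, hs⟩

lemma subset_attr2In (X U : Set S) : U ⊆ G.Attr2In X U :=
  fun s hs => Set.mem_iUnion.2 ⟨0, hs⟩

/-- Any finite subset of the attractor union is inside a single stage. -/
lemma finite_subset_stage [Finite S] {A : ℕ → Set S} (mono : Monotone A)
    {T : Set S} (h : T ⊆ ⋃ n, A n) : ∃ k, T ⊆ A k := by
  have := Fintype.ofFinite S
  classical
  set r : S → ℕ := fun t => sInf {n | t ∈ A n} with hr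
  refine ⟨Finset.univ.sup r, fun t ht => ?_⟩
  have hne : {n | t ∈ A n}.Nonempty := Set.mem_iUnion.1 (h ht)
  have ht' : t ∈ A (r t) := Nat.sInf_mem hne
  exact mono (Finset.le_sup (Finset.mem_univ t)) ht'

end Aux


section Aux2

open GameGraph

variable {S : Type u} (G : GameGraph S)

/-- Escape lemma (a): a player-1 state of `X` with an edge into the player-1
attractor is itself in the attractor. -/
lemma mem_attr1In_of_succ {X U : Set S} {s t : S} (hsX : s ∈ X)
    (hs1 : s ∈ G.S1) (ht : t ∈ G.E s) (htA : t ∈ G.Attr1In X U) :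
    s ∈ G.Attr1In X U := by
  obtain ⟨k, hk⟩ := Set.mem_iUnion.1 htA
  exact Set.mem_iUnion.2 ⟨k + 1, Or.inl (Or.inr ⟨hsX, hs1, t, ht, hk⟩)⟩

/-- Escape lemma (b): a player-2 state of `X` all of whose `X`-successors are
in the player-1 attractor is itself in the attractor. -/
lemma mem_attr1In_of_all_succ [Finite S] {X U : Set S} {s : S} (hsX : s ∈ X)
    (hs1 : s ∉ G.S1) (h : G.E s ∩ X ⊆ G.Attr1In X U) :
    s ∈ G.Attr1In X U := by
  obtain ⟨k, hk⟩ := finite_subset_stage (attrSeq1In_mono G X U) h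
  exact Set.mem_iUnion.2 ⟨k + 1, Or.inr ⟨hsX, hs1, hk⟩⟩

lemma mem_attr2In_of_succ {X U : Set S} {s t : S} (hsX : s ∈ X)
    (hs1 : s ∉ G.S1) (ht : t ∈ G.E s) (htA : t ∈ G.Attr2In X U) :
    s ∈ G.Attr2In X U := by
  obtain ⟨k, hk⟩ := Set.mem_iUnion.1 htA
  exact Set.mem_iUnion.2 ⟨k + 1, Or.inl (Or.inr ⟨hsX, hs1, t, ht, hk⟩)⟩

lemma mem_attr2In_of_all_succ [Finite S] {X U : Set S} {s : S} (hsX : s ∈ X)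
    (hs1 : s ∈ G.S1) (h : G.E s ∩ X ⊆ G.Attr2In X U) :
    s ∈ G.Attr2In X U := by
  obtain ⟨k, hk⟩ := finite_subset_stage (attrSeq2In_mono G X U) h
  exact Set.mem_iUnion.2 ⟨k + 1, Or.inr ⟨hsX, hs1, hk⟩⟩

/-- Rank of a state in the player-1 attractor. -/
noncomputable def rk1 (X U : Set S) (s : S) : ℕ := sInf {k | s ∈ G.AttrSeq1In X U k}

noncomputable def rk2 (X U : Set S) (s : S) : ℕ := sInf {k | s ∈ G.AttrSeq2In X U k}

lemma rk1_mem {X U : Set S} {s : S} (hs : s ∈ G.Attr1In X U) :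
    s ∈ G.AttrSeq1In X U (rk1 G X U s) :=
  Nat.sInf_mem (Set.mem_iUnion.1 hs)

lemma rk2_mem {X U : Set S} {s : S} (hs : s ∈ G.Attr2In X U) :
    s ∈ G.AttrSeq2In X U (rk2 G X U s) :=
  Nat.sInf_mem (Set.mem_iUnion.1 hs)

lemma rk1_le {X U : Set S} {s : S} {k : ℕ} (hs : s ∈ G.AttrSeq1In X U k) :
    rk1 G X U s ≤ k := Nat.sInf_le hs

lemma rk2_le {X U : Set S} {s : S} {k : ℕ} (hs : s ∈ G.AttrSeq2In X U k) :
    rk2 G X U s ≤ k := Nat.sInf_le hs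

lemma rk1_zero {X U : Set S} {s : S} (hs : s ∈ G.Attr1In X U)
    (h : rk1 G X U s = 0) : s ∈ U := by
  have := rk1_mem G hs; rw [h] at this; exact this

lemma rk2_zero {X U : Set S} {s : S} (hs : s ∈ G.Attr2In X U)
    (h : rk2 G X U s = 0) : s ∈ U := by
  have := rk2_mem G hs; rw [h] at this; exact this

/-- Analysis of a positive-rank state in the player-1 attractor. -/
lemma rk1_succ {X U : Set S} {s : S} {k : ℕ} (hs : s ∈ G.Attr1In X U)
    (h : rk1 G X U s = k + 1) :
    (s ∈ G.S1 ∧ ∃ t ∈ G.E s, t ∈ G.AttrSeq1In X U k) ∨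
    (s ∉ G.S1 ∧ G.E s ∩ X ⊆ G.AttrSeq1In X U k) := by
  have hmem := rk1_mem G hs
  rw [h] at hmem
  have hnot : s ∉ G.AttrSeq1In X U k := by
    intro hk; have := rk1_le G hk; omega
  rcases hmem with ((h' | h') | h')
  · exact absurd h' hnot
  · exact Or.inl ⟨h'.2.1, h'.2.2⟩
  · exact Or.inr ⟨h'.2.1, h'.2.2⟩

lemma rk2_succ {X U : Set S} {s : S} {k : ℕ} (hs : s ∈ G.Attr2In X U)
    (h : rk2 G X U s = k + 1) :
    (s ∉ G.S1 ∧ ∃ t ∈ G.E s, t ∈ G.AttrSeq2In X U k) ∨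
    (s ∈ G.S1 ∧ G.E s ∩ X ⊆ G.AttrSeq2In X U k) := by
  have hmem := rk2_mem G hs
  rw [h] at hmem
  have hnot : s ∉ G.AttrSeq2In X U k := by
    intro hk; have := rk2_le G hk; omega
  rcases hmem with ((h' | h') | h')
  · exact absurd h' hnot
  · exact Or.inl ⟨h'.2.1, h'.2.2⟩
  · exact Or.inr ⟨h'.2.1, h'.2.2⟩

end Aux2

section Aux3

open GameGraph

variable {S : Type u} [Finite S] (G : GameGraph S) (B : Set S)

/-- The "trap" set at stage `n` of the algorithm. -/
noncomputable def TrapN (n : ℕ) : Set S :=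
  classicalS G B n \ G.Attr1In (classicalS G B n) (B ∩ classicalS G B n)

lemma classicalS_succ (n : ℕ) :
    classicalS G B (n+1) =
      classicalS G B n \ G.Attr2In (classicalS G B n) (TrapN G B n) := rfl

lemma classicalS_antitone : Antitone (classicalS G B) := by
  apply antitone_nat_of_succ_le
  intro n
  rw [classicalS_succ]
  exact Set.diff_subset

/-- Each stage of the algorithm is a player-2 closed set. -/
lemma classicalS_closed2 (n : ℕ) : G.Closed2 (classicalS G B n) := by
  induction n with
  | zero =>
    constructor
    · intro s _ t _; trivial
    · intro s _
      obtain ⟨t, ht⟩ := G.succ_nonempty s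
      exact ⟨t, ht, trivial⟩
  | succ n ih =>
    rw [classicalS_succ]
    set S' := classicalS G B n
    set A := G.Attr2In S' (TrapN G B n) with hA
    constructor
    · rintro s ⟨hs, hs1⟩ t ht
      have hsS' : s ∈ S' := hs.1
      have htS' : t ∈ S' := ih.1 s ⟨hsS', hs1⟩ ht
      refine ⟨htS', fun htA => ?_⟩
      exact hs.2 (mem_attr2In_of_succ G hsS' hs1 ht htA)
    · rintro s ⟨hs, hs1⟩
      have hsS' : s ∈ S' := hs.1
      by_contra hc
      rw [Set.not_nonempty_iff_eq_empty] at hc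
      have hall : G.E s ∩ S' ⊆ A := by
        rintro t ⟨ht, htS'⟩
        by_contra htA
        have : t ∈ G.E s ∩ (S' \ A) := ⟨ht, htS', htA⟩
        rw [hc] at this
        exact this
      exact hs.2 (mem_attr2In_of_all_succ G hsS' hs1 hall)

/-- The iteration stabilizes. -/
lemma classicalS_stab : ∃ N, ∀ m, N ≤ m → classicalS G B m = classicalS G B N := by
  obtain ⟨N, hN⟩ := nat_antitone_eventually_const (fun n => (classicalS G B n).ncard)
    (fun n => Set.ncard_le_ncard (classicalS_antitone G B (Nat.le_succ n)) (Set.toFinite _))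
  refine ⟨N, fun m hm => ?_⟩
  refine Set.eq_of_subset_of_ncard_le (classicalS_antitone G B hm) ?_ (Set.toFinite _)
  exact le_of_eq (hN m hm).symm

lemma iInter_eq_stab {N : ℕ} (hN : ∀ m, N ≤ m → classicalS G B m = classicalS G B N) :
    (⋂ n, classicalS G B n) = classicalS G B N := by
  apply Set.Subset.antisymm
  · exact Set.iInter_subset _ N
  · refine Set.subset_iInter fun m => ?_
    rcases le_total m N with h | h
    · exact classicalS_antitone G B h
    · rw [hN m h]

/-- At the fixpoint, the whole set is inside the player-1 attractor of `B`. -/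
lemma fixpoint_attr {N : ℕ} (hfix : classicalS G B (N+1) = classicalS G B N) :
    classicalS G B N ⊆ G.Attr1In (classicalS G B N) (B ∩ classicalS G B N) := by
  intro s hs
  by_contra hsA
  have hsT : s ∈ TrapN G B N := ⟨hs, hsA⟩
  have hsA2 : s ∈ G.Attr2In (classicalS G B N) (TrapN G B N) :=
    subset_attr2In G _ _ hsT
  have : s ∈ classicalS G B (N+1) := hfix ▸ hs
  rw [classicalS_succ] at this
  exact this.2 hsA2

end Aux3


section AuxPlay

open GameGraph

variable {S : Type u} (G : GameGraph S)

lemma play_zero (σ π : List S → S → S) (s : S) : G.play σ π s 0 = s := rfl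

lemma play_succ_mem (σ π : G.Strat) (s : S) (n : ℕ) :
    G.play σ.1 π.1 s (n+1) ∈ G.E (G.play σ.1 π.1 s n) := by
  show (G.playPair σ.1 π.1 s (n+1)).2 ∈ _
  rw [playPair]
  dsimp only
  split
  · exact σ.2 _ _
  · exact π.2 _ _

lemma play_succ_liftML (f : S → S) (π : List S → S → S) (s : S) (n : ℕ)
    (h : G.play (liftML f) π s n ∈ G.S1) :
    G.play (liftML f) π s (n+1) = f (G.play (liftML f) π s n) := by
  show (G.playPair (liftML f) π s (n+1)).2 = _
  rw [playPair]
  dsimp only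
  have h' : (G.playPair (liftML f) π s n).2 ∈ G.S1 := h
  rw [if_pos h']
  rfl

end AuxPlay

section PartA

open GameGraph

variable {S : Type u} [Finite S] (G : GameGraph S) (B : Set S)

theorem inter_subset_W1 : (⋂ n, classicalS G B n) ⊆ G.W1 (Buchi B) := by
  obtain ⟨N, hN⟩ := classicalS_stab G B
  set X := classicalS G B N with hX
  have hXI : (⋂ n, classicalS G B n) = X := iInter_eq_stab G B hN
  have hfix : classicalS G B (N+1) = classicalS G B N := hN (N+1) (Nat.le_succ N)
  have hattr : X ⊆ G.Attr1In X (B ∩ X) := fixpoint_attr G B hfix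
  have hcl : G.Closed2 X := classicalS_closed2 G B N
  rw [hXI]
  set U := B ∩ X with hU
  have hUX : U ⊆ X := Set.inter_subset_right
  set r : S → ℕ := fun s => rk1 G X U s with hr
  have hA : ∀ s, ∃ t, t ∈ G.E s ∧
      (s ∈ X → s ∈ G.S1 → t ∈ X ∧ (r s ≠ 0 → r t < r s)) := by
    intro s
    by_cases hsX : s ∈ X
    · by_cases hs1 : s ∈ G.S1
      · cases h : r s with
        | zero =>
          obtain ⟨t, htE, htX⟩ := hcl.2 s ⟨hsX, hs1⟩
          exact ⟨t, htE, fun _ _ => ⟨htX, fun h0 => absurd rfl h0⟩⟩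
        | succ k =>
          rcases rk1_succ G (hattr hsX) h with ⟨_, t, htE, htA⟩ | ⟨hns1, _⟩
          · refine ⟨t, htE, fun _ _ => ⟨attrSeq1In_subset G hUX k htA, fun _ => ?_⟩⟩
            have := rk1_le G htA
            simp only [hr]
            omega
          · exact absurd hs1 hns1
      · obtain ⟨t, ht⟩ := G.succ_nonempty s
        exact ⟨t, ht, fun _ h1 => absurd h1 hs1⟩
    · obtain ⟨t, ht⟩ := G.succ_nonempty s
      exact ⟨t, ht, fun h1 => absurd h1 hsX⟩
  choose f hfE hfX using hA
  set σ : G.Strat := ⟨liftML f, fun _ s => hfE s⟩ with hσ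
  intro s hsX
  refine ⟨σ, fun π => ?_⟩
  set ω := G.play σ.1 π.1 s with hω
  have hstep : ∀ k, ω k ∈ X →
      ω (k+1) ∈ X ∧ (r (ω k) ≠ 0 → r (ω (k+1)) < r (ω k)) := by
    intro k hk
    by_cases h1 : ω k ∈ G.S1
    · have heq : ω (k+1) = f (ω k) := play_succ_liftML G f π.1 s k h1
      rw [heq]
      exact hfX _ hk h1
    · have hE : ω (k+1) ∈ G.E (ω k) := play_succ_mem G σ π s k
      have hX' : ω (k+1) ∈ X := hcl.1 (ω k) ⟨hk, h1⟩ hE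
      refine ⟨hX', fun h0 => ?_⟩
      cases h' : r (ω k) with
      | zero => exact absurd h' h0
      | succ k' =>
        rcases rk1_succ G (hattr hk) h' with ⟨hs1, _⟩ | ⟨_, hsub⟩
        · exact absurd hs1 h1
        · have := rk1_le G (hsub ⟨hE, hX'⟩)
          simp only [hr]
          omega
  have hXall : ∀ k, ω k ∈ X := by
    intro k
    induction k with
    | zero => exact hsX
    | succ k ih => exact (hstep k ih).1
  have hB : ∀ k, ∃ j, k ≤ j ∧ ω j ∈ B := by
    have key : ∀ m k, r (ω k) = m → ∃ j, k ≤ j ∧ ω j ∈ B := by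
      intro m
      induction m using Nat.strong_induction_on with
      | _ m ih =>
        intro k hm
        by_cases h0 : r (ω k) = 0
        · have := rk1_zero G (hattr (hXall k)) h0
          exact ⟨k, le_refl k, this.1⟩
        · have hlt := (hstep k (hXall k)).2 h0
          obtain ⟨j, hj, hjB⟩ := ih (r (ω (k+1))) (hm ▸ hlt) (k+1) rfl
          exact ⟨j, by omega, hjB⟩
    intro k
    exact key _ k rfl
  exact infOcc_inter_nonempty ω B hB

end PartA


section PartB

open GameGraph

variable {S : Type u} [Finite S] (G : GameGraph S) (B : Set S)

lemma play_succ_liftML2 (f : S → S) (σ : List S → S → S) (s : S) (n : ℕ)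
    (h : G.play σ (liftML f) s n ∉ G.S1) :
    G.play σ (liftML f) s (n+1) = f (G.play σ (liftML f) s n) := by
  show (G.playPair σ (liftML f) s (n+1)).2 = _
  rw [playPair]
  dsimp only
  have h' : ¬ (G.playPair σ (liftML f) s n).2 ∈ G.S1 := h
  rw [if_neg h']
  rfl

theorem compl_subset_W2 : (⋂ n, classicalS G B n)ᶜ ⊆ G.W2 (coBuchi Bᶜ) := by
  classical
  set X : Set S := ⋂ n, classicalS G B n with hXdef
  set L : S → ℕ := fun s => sInf {n | s ∉ classicalS G B (n+1)} with hLdef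
  set ρ : S → ℕ := fun s =>
    rk2 G (classicalS G B (L s)) (TrapN G B (L s)) s with hρdef
  -- basic facts about compl membership and layers
  have hXc : ∀ s, s ∈ Xᶜ → {n | s ∉ classicalS G B (n+1)}.Nonempty := by
    intro s hs
    rw [Set.mem_compl_iff, hXdef, Set.mem_iInter, not_forall] at hs
    obtain ⟨n, hn⟩ := hs
    cases n with
    | zero => exact absurd trivial hn
    | succ m => exact ⟨m, hn⟩
  have hL1 : ∀ s ∈ Xᶜ, s ∉ classicalS G B (L s + 1) := fun s hs =>
    Nat.sInf_mem (hXc s hs)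
  have hL2 : ∀ s ∈ Xᶜ, s ∈ classicalS G B (L s) := by
    intro s hs
    cases hl : L s with
    | zero => exact trivial
    | succ m =>
      by_contra hc
      have : m ∈ {n | s ∉ classicalS G B (n+1)} := hc
      have := Nat.sInf_le this
      rw [hLdef] at hl
      simp only at hl this
      omega
  have hmemXc : ∀ (n : ℕ) (t : S), t ∉ classicalS G B n → t ∈ Xᶜ := by
    intro n t ht
    rw [Set.mem_compl_iff, hXdef, Set.mem_iInter, not_forall]
    exact ⟨n, ht⟩
  -- every state of a stage-n player-2 attractor set is in layer n with the
  -- right rank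
  have hstage : ∀ (n : ℕ) (t : S) (k : ℕ),
      t ∈ G.AttrSeq2In (classicalS G B n) (TrapN G B n) k →
      t ∈ Xᶜ ∧ L t = n ∧ ρ t ≤ k := by
    intro n t k htk
    have hTsub : TrapN G B n ⊆ classicalS G B n := Set.diff_subset
    have htSn : t ∈ classicalS G B n := attrSeq2In_subset G hTsub k htk
    have htA : t ∈ G.Attr2In (classicalS G B n) (TrapN G B n) :=
      Set.mem_iUnion.2 ⟨k, htk⟩
    have htn1 : t ∉ classicalS G B (n+1) := by
      rw [classicalS_succ]
      rintro ⟨_, hA⟩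
      exact hA htA
    have htXc : t ∈ Xᶜ := hmemXc (n+1) t htn1
    have hLle : L t ≤ n := Nat.sInf_le htn1
    have hLge : n ≤ L t := by
      by_contra hlt
      push_neg at hlt
      have h1 : t ∉ classicalS G B (L t + 1) := hL1 t htXc
      have h2 : classicalS G B n ⊆ classicalS G B (L t + 1) :=
        classicalS_antitone G B (by omega)
      exact h1 (h2 htSn)
    have hLeq : L t = n := le_antisymm hLle hLge
    refine ⟨htXc, hLeq, ?_⟩
    rw [hρdef]
    simp only [hLeq]
    exact rk2_le G htk
  have hL3 : ∀ s ∈ Xᶜ,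
      s ∈ G.Attr2In (classicalS G B (L s)) (TrapN G B (L s)) := by
    intro s hs
    have h1 := hL1 s hs
    have h2 := hL2 s hs
    rw [classicalS_succ] at h1
    by_contra hc
    exact h1 ⟨h2, hc⟩
  -- trap properties
  have hTrapB : ∀ (n : ℕ) (s : S), s ∈ TrapN G B n → s ∉ B := by
    intro n s hsT hsB
    exact hsT.2 (subset_attr1In G _ _ ⟨hsB, hsT.1⟩)
  have hTrapSucc : ∀ (n : ℕ) (s : S), s ∈ TrapN G B n → s ∉ G.S1 →
      ∃ t ∈ G.E s, t ∈ TrapN G B n := by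
    intro n s hsT hs1
    have hcl := classicalS_closed2 G B n
    have hEsub : G.E s ⊆ classicalS G B n := hcl.1 s ⟨hsT.1, hs1⟩
    by_contra hc
    push_neg at hc
    have hall : G.E s ∩ classicalS G B n ⊆
        G.Attr1In (classicalS G B n) (B ∩ classicalS G B n) := by
      rintro t ⟨htE, htS⟩
      by_contra htA
      exact (hc t htE) ⟨htS, htA⟩
    exact hsT.2 (mem_attr1In_of_all_succ G hsT.1 hs1 hall)
  have hTrap1 : ∀ (n : ℕ) (s : S), s ∈ TrapN G B n → s ∈ G.S1 →
      ∀ t ∈ G.E s, t ∈ classicalS G B n → t ∈ TrapN G B n := by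
    intro n s hsT hs1 t htE htS
    refine ⟨htS, fun htA => ?_⟩
    exact hsT.2 (mem_attr1In_of_succ G hsT.1 hs1 htE htA)
  -- the "good successor" predicate
  set Good : S → S → Prop := fun s t => t ∈ Xᶜ ∧
    (L t < L s ∨ (L t = L s ∧ ρ t ≤ ρ s ∧ (ρ s ≠ 0 → ρ t < ρ s))) with hGood
  -- player-1 moves from the complement are always good
  have hP1 : ∀ s ∈ Xᶜ, s ∈ G.S1 → ∀ t ∈ G.E s, Good s t := by
    intro s hs hs1 t htE
    by_cases htS : t ∈ classicalS G B (L s)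
    · cases hρs : ρ s with
      | zero =>
        have hsT : s ∈ TrapN G B (L s) := by
          have := rk2_zero G (hL3 s hs) (by rw [hρdef] at hρs; exact hρs)
          exact this
        have htT : t ∈ TrapN G B (L s) := hTrap1 (L s) s hsT hs1 t htE htS
        obtain ⟨htXc, htL, htρ⟩ := hstage (L s) t 0 htT
        exact ⟨htXc, Or.inr ⟨htL, by omega, fun h0 => absurd hρs h0⟩⟩
      | succ k =>
        have hρs' : rk2 G (classicalS G B (L s)) (TrapN G B (L s)) s = k + 1 := by
          rw [hρdef] at hρs; exact hρs
        rcases rk2_succ G (hL3 s hs) hρs' with ⟨hns1, _⟩ | ⟨_, hsub⟩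
        · exact absurd hs1 hns1
        · obtain ⟨htXc, htL, htρ⟩ := hstage (L s) t k (hsub ⟨htE, htS⟩)
          exact ⟨htXc, Or.inr ⟨htL, by omega, fun _ => by omega⟩⟩
    · have htXc : t ∈ Xᶜ := hmemXc (L s) t htS
      have hLs0 : L s ≠ 0 := by
        intro h0
        rw [h0] at htS
        exact htS trivial
      obtain ⟨m, hm⟩ := Nat.exists_eq_succ_of_ne_zero hLs0
      have : L t ≤ m := Nat.sInf_le (show t ∉ classicalS G B (m+1) by
        rw [show m + 1 = L s by omega]; exact htS)
      exact ⟨htXc, Or.inl (by omega)⟩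
  -- player-2 strategy choice
  have hA : ∀ s, ∃ t, t ∈ G.E s ∧ (s ∈ Xᶜ → s ∉ G.S1 → Good s t) := by
    intro s
    by_cases hs : s ∈ Xᶜ
    · by_cases hs1 : s ∈ G.S1
      · obtain ⟨t, ht⟩ := G.succ_nonempty s
        exact ⟨t, ht, fun _ h => absurd hs1 h⟩
      · cases hρs : ρ s with
        | zero =>
          have hsT : s ∈ TrapN G B (L s) := by
            have := rk2_zero G (hL3 s hs) (by rw [hρdef] at hρs; exact hρs)
            exact this
          obtain ⟨t, htE, htT⟩ := hTrapSucc (L s) s hsT hs1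
          obtain ⟨htXc, htL, htρ⟩ := hstage (L s) t 0 htT
          exact ⟨t, htE, fun _ _ =>
            ⟨htXc, Or.inr ⟨htL, by omega, fun h0 => absurd hρs h0⟩⟩⟩
        | succ k =>
          have hρs' : rk2 G (classicalS G B (L s)) (TrapN G B (L s)) s = k + 1 := by
            rw [hρdef] at hρs; exact hρs
          rcases rk2_succ G (hL3 s hs) hρs' with ⟨_, t, htE, htk⟩ | ⟨hs1', _⟩
          · obtain ⟨htXc, htL, htρ⟩ := hstage (L s) t k htk
            exact ⟨t, htE, fun _ _ =>
              ⟨htXc, Or.inr ⟨htL, by omega, fun _ => by omega⟩⟩⟩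
          · exact absurd hs1' hs1
    · obtain ⟨t, ht⟩ := G.succ_nonempty s
      exact ⟨t, ht, fun h => absurd h hs⟩
  choose g hgE hgGood using hA
  set π : G.Strat := ⟨liftML g, fun _ s => hgE s⟩ with hπ
  intro s hsX
  refine ⟨π, fun σ => ?_⟩
  set ω := G.play σ.1 π.1 s with hω
  have hstep : ∀ k, ω k ∈ Xᶜ → Good (ω k) (ω (k+1)) := by
    intro k hk
    by_cases h1 : ω k ∈ G.S1
    · exact hP1 (ω k) hk h1 (ω (k+1)) (play_succ_mem G σ π s k)
    · have heq : ω (k+1) = g (ω k) := play_succ_liftML2 G g σ.1 s k h1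
      rw [heq]
      exact hgGood (ω k) hk h1
  have hXall : ∀ k, ω k ∈ Xᶜ := by
    intro k
    induction k with
    | zero => exact hsX
    | succ k ih => exact (hstep k ih).1
  have hLmono : ∀ k, L (ω (k+1)) ≤ L (ω k) := by
    intro k
    rcases (hstep k (hXall k)).2 with h | h
    · omega
    · omega
  obtain ⟨K1, hK1⟩ := nat_antitone_eventually_const (fun k => L (ω k)) hLmono
  have hLsame : ∀ k, K1 ≤ k → L (ω (k+1)) = L (ω k) := by
    intro k hk
    rw [hK1 (k+1) (by omega), hK1 k hk]
  have hρmono : ∀ k, K1 ≤ k →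
      ρ (ω (k+1)) ≤ ρ (ω k) ∧ (ρ (ω k) ≠ 0 → ρ (ω (k+1)) < ρ (ω k)) := by
    intro k hk
    rcases (hstep k (hXall k)).2 with h | h
    · exact absurd (hLsame k hk) (by omega)
    · exact ⟨h.2.1, h.2.2⟩
  obtain ⟨K2, hK2a, hK2⟩ := nat_antitone_eventually_const_from
    (fun k => ρ (ω k)) K1 (fun k hk => (hρmono k hk).1)
  have hnoB : ∀ k, K2 ≤ k → ω k ∉ B := by
    intro k hk hkB
    have hρne : ρ (ω k) ≠ 0 := by
      intro h0
      have hsT : ω k ∈ TrapN G B (L (ω k)) := by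
        have := rk2_zero G (hL3 (ω k) (hXall k)) (by rw [hρdef] at h0; exact h0)
        exact this
      exact hTrapB _ _ hsT hkB
    have hlt := (hρmono k (le_trans hK2a hk)).2 hρne
    have h1 := hK2 k hk
    have h2 := hK2 (k+1) (by omega)
    omega
  intro t ht
  obtain ⟨k, hk, hkt⟩ := ht K2
  rw [← hkt]
  exact hnoB k hk

end PartB


lemma W1_W2_not_both {S : Type u} (G : GameGraph S) (B : Set S) (s : S)
    (h1 : s ∈ G.W1 (Buchi B)) (h2 : s ∈ G.W2 (coBuchi Bᶜ)) : False := by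
  obtain ⟨σ, hσ⟩ := h1
  obtain ⟨π, hπ⟩ := h2
  obtain ⟨b, hbI, hbB⟩ := hσ π
  exact hπ σ hbI hbB

/-- correctness of the classical algorithm for Büchi games: the
limit of the iteration is `W1(Buchi B)` and the union of all removed sets is
`W2(coBuchi (S \ B))`. -/
theorem classical_correct {S : Type u} [Finite S] (G : GameGraph S)
    (B : Set S) :
    (⋂ n, classicalS G B n) = G.W1 (Buchi B) ∧
    (⋂ n, classicalS G B n)ᶜ = G.W2 (coBuchi Bᶜ) := by
  have h1 := inter_subset_W1 G B
  have h2 := compl_subset_W2 G B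
  constructor
  · apply Set.Subset.antisymm h1
    intro s hs
    by_contra hc
    exact W1_W2_not_both G B s hs (h2 hc)
  · apply Set.Subset.antisymm h2
    intro s hs
    by_contra hc
    rw [Set.notMem_compl_iff] at hc
    exact W1_W2_not_both G B s (h1 hc) hs
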